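/- Final probability bound for the random code: if m = A n / ε² with A > 2 ln 2 and δ = (1-ε)/2, then (n+1)(m+1) 2^{-m} e^{h(δ)(n+m)} ≤ (n+1)(m+1) e^{n ln 2 - (ε²/2)(n+m)} = 2^{-Ω(n)}. -/

import Mathlib

open Filter

/-- The derivative facts we need, packaged. -/
lemma aux_hasDeriv1 (x : ℝ) (h1 : (0:ℝ) < 1 + x) (h2 : (0:ℝ) < 1 - x) :
    HasDerivAt (fun x : ℝ => Real.log (1 + x) - Real.log (1 - x) - 2 * x)
      (1 / (1 + x) - (-1) / (1 - x) - 2) x := by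
  have d1 : HasDerivAt (fun x : ℝ => Real.log (1 + x)) (1 / (1 + x)) x := by
    have := (Real.hasDerivAt_log h1.ne').comp x ((hasDerivAt_id x).const_add 1)
    simpa [one_div, Function.comp_def] using this
  have d2 : HasDerivAt (fun x : ℝ => Real.log (1 - x)) ((-1) / (1 - x)) x := by
    have := (Real.hasDerivAt_log h2.ne').comp x ((hasDerivAt_id x).neg.const_add 1)
    simpa [div_eq_inv_mul, Function.comp_def] using this
  simpa [Pi.sub_def] using (d1.sub d2).sub ((hasDerivAt_id x).const_mul 2)

/-- `2x ≤ log(1+x) - log(1-x)` for `x ∈ [0,1)`. -/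
lemma aux_log_ineq : ∀ x : ℝ, 0 ≤ x → x < 1 → 2 * x ≤ Real.log (1 + x) - Real.log (1 - x) := by
  have hmono : MonotoneOn (fun x : ℝ => Real.log (1 + x) - Real.log (1 - x) - 2 * x)
      (Set.Ico 0 1) := by
    have hder : ∀ x ∈ interior (Set.Ico (0:ℝ) 1),
        HasDerivAt (fun x : ℝ => Real.log (1 + x) - Real.log (1 - x) - 2 * x)
          (1 / (1 + x) - (-1) / (1 - x) - 2) x := by
      intro x hx
      rw [interior_Ico] at hx
      simp only [Set.mem_Ioo] at hx
      exact aux_hasDeriv1 x (by linarith [hx.1]) (by linarith [hx.2])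
    apply monotoneOn_of_deriv_nonneg (convex_Ico 0 1)
    · apply ContinuousOn.sub (ContinuousOn.sub ?_ ?_) (by fun_prop)
      · apply ContinuousOn.log (by fun_prop)
        intro x hx; simp only [Set.mem_Ico] at hx; intro h; linarith [hx.1]
      · apply ContinuousOn.log (by fun_prop)
        intro x hx; simp only [Set.mem_Ico] at hx; intro h; linarith [hx.2]
    · intro x hx
      exact (hder x hx).differentiableAt.differentiableWithinAt
    · intro x hx
      rw [(hder x hx).deriv]
      rw [interior_Ico] at hx
      simp only [Set.mem_Ioo] at hx
      have h1 : (0:ℝ) < 1 + x := by linarith [hx.1]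
      have h2 : (0:ℝ) < 1 - x := by linarith [hx.2]
      rw [div_sub_div _ _ h1.ne' h2.ne', sub_nonneg, le_div_iff₀ (by positivity)]
      nlinarith [sq_nonneg x, hx.1]
  intro x hx0 hx1
  have := hmono (Set.mem_Ico.2 ⟨le_refl 0, one_pos⟩) (Set.mem_Ico.2 ⟨hx0, hx1⟩) hx0
  simp only [add_zero, sub_zero, Real.log_one, mul_zero] at this
  linarith

lemma aux_hasDeriv2 (x : ℝ) (h1 : (0:ℝ) < 1 + x) (h2 : (0:ℝ) < 1 - x) :
    HasDerivAt
      (fun x : ℝ => (1 - x) * Real.log (1 - x) + (1 + x) * Real.log (1 + x) - x ^ 2)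
      ((Real.log (1 + x) - Real.log (1 - x) - 2 * x)) x := by
  have d1 : HasDerivAt (fun x : ℝ => Real.log (1 + x)) (1 / (1 + x)) x := by
    have := (Real.hasDerivAt_log h1.ne').comp x ((hasDerivAt_id x).const_add 1)
    simpa [one_div, Function.comp_def] using this
  have d2 : HasDerivAt (fun x : ℝ => Real.log (1 - x)) ((-1) / (1 - x)) x := by
    have := (Real.hasDerivAt_log h2.ne').comp x ((hasDerivAt_id x).neg.const_add 1)
    simpa [div_eq_inv_mul, Function.comp_def] using this
  have dl : HasDerivAt (fun x : ℝ => 1 - x) (-1) x := by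
    simpa using ((hasDerivAt_id x).const_sub 1)
  have dr : HasDerivAt (fun x : ℝ => 1 + x) 1 x := by
    simpa using ((hasDerivAt_id x).const_add 1)
  have d3 := dl.mul d2
  have d4 := dr.mul d1
  have := (d3.add d4).sub (hasDerivAt_pow 2 x)
  convert this using 1
  · rfl
  · rfl
  · rfl
  have e1 : (1 - x) * ((-1) / (1 - x)) = -1 := by field_simp
  have e2 : (1 + x) * (1 / (1 + x)) = 1 := by field_simp
  rw [e1, e2]
  push_cast
  ring

/-- `x² ≤ (1-x)log(1-x) + (1+x)log(1+x)` for `x ∈ [0,1)`. -/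
lemma aux_sq_le : ∀ x : ℝ, 0 ≤ x → x < 1 →
    x ^ 2 ≤ (1 - x) * Real.log (1 - x) + (1 + x) * Real.log (1 + x) := by
  have hmono : MonotoneOn
      (fun x : ℝ => (1 - x) * Real.log (1 - x) + (1 + x) * Real.log (1 + x) - x ^ 2)
      (Set.Ico 0 1) := by
    have hder : ∀ x ∈ interior (Set.Ico (0:ℝ) 1),
        HasDerivAt
          (fun x : ℝ => (1 - x) * Real.log (1 - x) + (1 + x) * Real.log (1 + x) - x ^ 2)
          ((Real.log (1 + x) - Real.log (1 - x) - 2 * x)) x := by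
      intro x hx
      rw [interior_Ico] at hx
      simp only [Set.mem_Ioo] at hx
      exact aux_hasDeriv2 x (by linarith [hx.1]) (by linarith [hx.2])
    apply monotoneOn_of_deriv_nonneg (convex_Ico 0 1)
    · apply ContinuousOn.sub (ContinuousOn.add ?_ ?_) (by fun_prop)
      · exact ContinuousOn.mul (by fun_prop) <| ContinuousOn.log (by fun_prop)
          (fun x hx => by simp only [Set.mem_Ico] at hx; intro h; linarith [hx.2])
      · exact ContinuousOn.mul (by fun_prop) <| ContinuousOn.log (by fun_prop)
          (fun x hx => by simp only [Set.mem_Ico] at hx; intro h; linarith [hx.1])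
    · intro x hx
      exact (hder x hx).differentiableAt.differentiableWithinAt
    · intro x hx
      rw [(hder x hx).deriv]
      rw [interior_Ico] at hx
      simp only [Set.mem_Ioo] at hx
      have := aux_log_ineq x hx.1.le hx.2
      linarith
  intro x hx0 hx1
  have := hmono (Set.mem_Ico.2 ⟨le_refl 0, one_pos⟩) (Set.mem_Ico.2 ⟨hx0, hx1⟩) hx0
  norm_num at this
  linarith

noncomputable def binEntropy (δ : ℝ) : ℝ := -δ * Real.log δ - (1 - δ) * Real.log (1 - δ)

lemma binEntropy_key (ε : ℝ) (hε0 : 0 < ε) (hε1 : ε ≤ 1) :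
    binEntropy ((1 - ε) / 2) ≤ Real.log 2 - ε ^ 2 / 2 := by
  have hlog2 : (0.6931471803:ℝ) < Real.log 2 := Real.log_two_gt_d9
  rcases eq_or_lt_of_le hε1 with rfl | hε1'
  · simp only [binEntropy]
    norm_num
    linarith
  · have h1 : (0:ℝ) < 1 - ε := by linarith
    have h2 : (0:ℝ) < 1 + ε := by linarith
    have e1 : Real.log ((1 - ε) / 2) = Real.log (1 - ε) - Real.log 2 :=
      Real.log_div h1.ne' two_ne_zero
    have e2 : (1 : ℝ) - (1 - ε) / 2 = (1 + ε) / 2 := by ring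
    have e3 : Real.log ((1 + ε) / 2) = Real.log (1 + ε) - Real.log 2 :=
      Real.log_div h2.ne' two_ne_zero
    have key := aux_sq_le ε hε0.le hε1'
    simp only [binEntropy, e1, e2, e3]
    nlinarith [key]

theorem stmt_17 (ε A : ℝ) (hε0 : 0 < ε) (hε1 : ε ≤ 1) (hA : 2 * Real.log 2 < A) :
    (∀ n m : ℕ, 1 ≤ n → A * n / ε ^ 2 ≤ m →
      ((n : ℝ) + 1) * (m + 1) * 2 ^ (-(m : ℝ)) *
          Real.exp (binEntropy ((1 - ε) / 2) * (n + m)) ≤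
        ((n : ℝ) + 1) * (m + 1) *
          Real.exp (n * Real.log 2 - ε ^ 2 / 2 * (n + m))) ∧
    Filter.Tendsto
      (fun n : ℕ =>
        ((n : ℝ) + 1) * ((⌈A * n / ε ^ 2⌉₊ : ℝ) + 1) * 2 ^ (-(⌈A * n / ε ^ 2⌉₊ : ℝ)) *
          Real.exp (binEntropy ((1 - ε) / 2) * (n + ⌈A * n / ε ^ 2⌉₊)))
      Filter.atTop (nhds 0) := by
  have hkey := binEntropy_key ε hε0 hε1
  have hA0 : 0 < A := lt_trans (mul_pos two_pos (Real.log_pos one_lt_two)) hA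
  have hrw : ∀ m : ℕ, (2 : ℝ) ^ (-(m : ℝ)) = Real.exp (-(m : ℝ) * Real.log 2) := by
    intro m
    rw [Real.rpow_def_of_pos two_pos, mul_comm]
  -- the pointwise bound, with no hypothesis on m needed
  have hpt : ∀ n m : ℕ,
      ((n : ℝ) + 1) * (m + 1) * 2 ^ (-(m : ℝ)) *
          Real.exp (binEntropy ((1 - ε) / 2) * (n + m)) ≤
        ((n : ℝ) + 1) * (m + 1) *
          Real.exp (n * Real.log 2 - ε ^ 2 / 2 * (n + m)) := by
    intro n m
    rw [hrw, mul_assoc (((n : ℝ) + 1) * (m + 1)), ← Real.exp_add]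
    apply mul_le_mul_of_nonneg_left _ (by positivity)
    rw [Real.exp_le_exp]
    have hnm : (0:ℝ) ≤ (n : ℝ) + m := by positivity
    nlinarith [hkey, hnm]
  refine ⟨fun n m _ _ => hpt n m, ?_⟩
  -- tendsto part
  set c : ℝ := A / 2 + ε ^ 2 / 2 - Real.log 2 with hc
  have hcpos : 0 < c := by
    have := sq_nonneg ε
    simp only [hc]
    nlinarith
  set K : ℝ := A / ε ^ 2 + 2 with hK
  have hKpos : 0 < K := by
    have : 0 < A / ε ^ 2 := div_pos hA0 (by positivity)
    simp only [hK]; linarith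
  clear_value c K
  have hbound : ∀ n : ℕ,
      ((n : ℝ) + 1) * ((⌈A * n / ε ^ 2⌉₊ : ℝ) + 1) * 2 ^ (-(⌈A * n / ε ^ 2⌉₊ : ℝ)) *
          Real.exp (binEntropy ((1 - ε) / 2) * (n + ⌈A * n / ε ^ 2⌉₊))
        ≤ K * ((n : ℝ) + 1) ^ 2 * Real.exp (-(c * n)) := by
    intro n
    set m : ℕ := ⌈A * n / ε ^ 2⌉₊ with hm
    have hmle : A * n / ε ^ 2 ≤ (m : ℝ) := Nat.le_ceil _
    have hArn : 0 ≤ A * n / ε ^ 2 := by positivity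
    have hstep := hpt n m
    refine hstep.trans ?_
    have hexp : (n : ℝ) * Real.log 2 - ε ^ 2 / 2 * (n + m) ≤ -(c * n) := by
      have h1 : A * n / 2 ≤ ε ^ 2 / 2 * m := by
        have h := mul_le_mul_of_nonneg_left hmle (le_of_lt (by positivity : (0:ℝ) < ε ^ 2 / 2))
        calc A * n / 2 = ε ^ 2 / 2 * (A * n / ε ^ 2) := by field_simp
          _ ≤ ε ^ 2 / 2 * m := h
      simp only [hc]
      nlinarith [(Nat.cast_nonneg n : (0:ℝ) ≤ (n:ℝ))]
    have hm1 : (m : ℝ) + 1 ≤ K * ((n : ℝ) + 1) := by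
      have hceil : (m : ℝ) ≤ A * n / ε ^ 2 + 1 := by
        have := Nat.ceil_lt_add_one (R := ℝ) hArn
        linarith
      have hn0 : (0:ℝ) ≤ (n : ℝ) := Nat.cast_nonneg n
      have h2 : A * n / ε ^ 2 ≤ A / ε ^ 2 * ((n:ℝ) + 1) := by
        rw [div_mul_eq_mul_div, div_le_div_iff_of_pos_right (by positivity)]
        nlinarith
      simp only [hK]
      nlinarith
    calc ((n : ℝ) + 1) * ((m : ℝ) + 1) * Real.exp ((n : ℝ) * Real.log 2 - ε ^ 2 / 2 * (n + m))
        ≤ ((n : ℝ) + 1) * (K * ((n : ℝ) + 1)) * Real.exp (-(c * n)) := by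
          apply mul_le_mul (mul_le_mul_of_nonneg_left hm1 (by positivity))
            (Real.exp_le_exp.2 hexp) (Real.exp_pos _).le (by positivity)
      _ = K * ((n : ℝ) + 1) ^ 2 * Real.exp (-(c * n)) := by ring
  -- the dominating sequence tends to 0
  have hdom : Tendsto (fun n : ℕ => K * ((n : ℝ) + 1) ^ 2 * Real.exp (-(c * n)))
      atTop (nhds 0) := by
    have heq : ∀ n : ℕ, K * ((n : ℝ) + 1) ^ 2 * Real.exp (-(c * n)) =
        (K / c ^ 2 * Real.exp c) *
          ((c * ((n : ℝ) + 1)) ^ 2 * Real.exp (-(c * ((n:ℝ) + 1)))) := by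
      intro n
      rw [show -(c * ((n:ℝ) + 1)) = -(c * (n:ℝ)) - c by ring, Real.exp_sub, mul_pow]
      field_simp
    have hcomp : Tendsto (fun n : ℕ => c * ((n : ℝ) + 1)) atTop atTop := by
      apply Tendsto.const_mul_atTop hcpos
      exact tendsto_atTop_add_const_right _ _ tendsto_natCast_atTop_atTop
    have h0 := ((Real.tendsto_pow_mul_exp_neg_atTop_nhds_zero 2).comp hcomp).const_mul
      (K / c ^ 2 * Real.exp c)
    rw [mul_zero] at h0
    exact h0.congr (fun n => (heq n).symm)
  apply squeeze_zero (fun n => by positivity) hbound hdom
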